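/- Small-frequency asymptotics of the spectral density of fractional Brownian motion increments: let H ∈ (0,1), C_H = Γ(2H+1) sin(πH)/π and f_H(λ) = C_H (1 − cos λ) Σ_{k∈ℤ} |2πk + λ|^{−1−2H} for λ ∈ (-π,π)∖{0}. Then for every integer k ≥ 0, lim_{λ→0} ∂_H^k f_H(λ) / ( 2^{k−1} C_H |λ|^{1−2H} (log(1/|λ|))^k ) = 1; in particular f_H(λ) ~ (C_H/2)|λ|^{1−2H} and ∂_H f_H(λ) ~ C_H |λ|^{1−2H} log(1/|λ|) as λ → 0. -/

import Mathlib

open MeasureTheory Real Filter Topology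

noncomputable section

/-- `C_H = Γ(2H+1) sin(πH)/π`. -/
def CH (H : ℝ) : ℝ := Real.Gamma (2 * H + 1) * Real.sin (π * H) / π

/-- The spectral density of the increments of fractional Brownian motion with Hurst
parameter `H`: `f_H(λ) = C_H (1 - cos λ) Σ_{k∈ℤ} |2πk + λ|^{-1-2H}`. -/
def fBmSpec (H : ℝ) (l : ℝ) : ℝ :=
  CH H * (1 - Real.cos l) * ∑' k : ℤ, |2 * π * (k : ℝ) + l| ^ (-1 - 2 * H)

namespace FBMaux

lemma five_le {l : ℝ} (hl1 : |l| ≤ 1) {k : ℤ} (hk : k ≠ 0) :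
    5 * |(k : ℝ)| ≤ |2 * π * (k : ℝ) + l| := by
  have h1 : (1:ℝ) ≤ |(k:ℝ)| := by exact_mod_cast Int.one_le_abs hk
  have h2 : |2 * π * (k : ℝ)| = 2 * π * |(k:ℝ)| := by
    rw [abs_mul, abs_of_pos (by positivity : (0:ℝ) < 2 * π)]
  have h3 : |2 * π * (k : ℝ)| ≤ |2 * π * (k : ℝ) + l| + |l| := by
    calc |2 * π * (k : ℝ)| = |(2 * π * (k : ℝ) + l) + (-l)| := by ring_nf
      _ ≤ |2 * π * (k : ℝ) + l| + |(-l)| := abs_add_le _ _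
      _ = |2 * π * (k : ℝ) + l| + |l| := by rw [abs_neg]
  have hπ : (3:ℝ) < π := Real.pi_gt_three
  nlinarith [abs_nonneg l]

lemma le_eight {l : ℝ} (hl1 : |l| ≤ 1) {k : ℤ} (hk : k ≠ 0) :
    |2 * π * (k : ℝ) + l| ≤ 8 * |(k : ℝ)| := by
  have h1 : (1:ℝ) ≤ |(k:ℝ)| := by exact_mod_cast Int.one_le_abs hk
  have h2 : |2 * π * (k : ℝ)| = 2 * π * |(k:ℝ)| := by
    rw [abs_mul, abs_of_pos (by positivity : (0:ℝ) < 2 * π)]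
  have h3 : |2 * π * (k : ℝ) + l| ≤ |2 * π * (k : ℝ)| + |l| := abs_add_le _ _
  have hπ : π < 3.15 := Real.pi_lt_d2
  nlinarith [abs_nonneg l]

lemma aZ_pos {l : ℝ} (hl : l ≠ 0) (hl1 : |l| ≤ 1) (k : ℤ) :
    0 < |2 * π * (k : ℝ) + l| := by
  rcases eq_or_ne k 0 with rfl | hk
  · simpa using abs_pos.2 hl
  · have h1 : (1:ℝ) ≤ |(k:ℝ)| := by exact_mod_cast Int.one_le_abs hk
    have := five_le hl1 hk
    linarith

lemma summable_master (p : ℕ) {b : ℝ} (hb : 0 < b) :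
    Summable (fun k : ℤ => if k = 0 then 0 else
      (2 * Real.log (8 * |(k : ℝ)|)) ^ p * (5 * |(k : ℝ)|) ^ (-1 - 2 * b)) := by
  set ε : ℝ := b / (p + 1) with hεdef
  have hε : 0 < ε := by positivity
  set C : ℝ := (2 / ε) ^ p * (8:ℝ) ^ (b:ℝ) * (5:ℝ) ^ (-1 - 2 * b) with hC
  have hC0 : 0 ≤ C := by positivity
  have hsum : Summable (fun k : ℤ => C * |(k : ℝ)| ^ (-(1 + b))) :=
    (Real.summable_abs_int_rpow (by linarith)).mul_left C
  refine Summable.of_nonneg_of_le (fun k => ?_) (fun k => ?_) hsum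
  · rcases eq_or_ne k 0 with rfl | hk
    · simp
    · have h1 : (1:ℝ) ≤ |(k:ℝ)| := by exact_mod_cast Int.one_le_abs hk
      have h8 : (0:ℝ) < 8 * |(k:ℝ)| := by linarith
      have hlog : 0 ≤ Real.log (8 * |(k:ℝ)|) := Real.log_nonneg (by linarith)
      simp only [if_neg hk]
      positivity
  · rcases eq_or_ne k 0 with rfl | hk
    · simp [Real.rpow_natCast]
      positivity
    · simp only [if_neg hk]
      set n : ℝ := |(k:ℝ)| with hn
      have h1 : (1:ℝ) ≤ n := by rw [hn]; exact_mod_cast Int.one_le_abs hk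
      have hn0 : 0 < n := by linarith
      have h8 : (1:ℝ) ≤ 8 * n := by linarith
      have hlog0 : 0 ≤ Real.log (8 * n) := Real.log_nonneg h8
      -- log bound
      have hlb : Real.log (8 * n) ≤ (8 * n) ^ ε / ε :=
        Real.log_le_rpow_div (by linarith) hε
      have step1 : (2 * Real.log (8 * n)) ^ p ≤ (2 * ((8 * n) ^ ε / ε)) ^ p := by
        apply pow_le_pow_left₀ (by linarith) (by linarith)
      have step2 : (2 * ((8 * n) ^ ε / ε)) ^ p = (2 / ε) ^ p * ((8 * n) ^ (ε * p)) := by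
        rw [show (2 * ((8*n)^ε/ε)) = (2/ε) * (8*n)^ε by ring, mul_pow,
          ← Real.rpow_natCast ((8*n)^ε) p, ← Real.rpow_mul (by linarith : (0:ℝ) ≤ 8*n)]
      have step3 : (8 * n) ^ (ε * p) ≤ (8 * n) ^ (b : ℝ) := by
        apply Real.rpow_le_rpow_of_exponent_le h8
        rw [hεdef]
        rw [div_mul_eq_mul_div, div_le_iff₀ (by positivity)]
        nlinarith [hb.le, Nat.cast_nonneg (α := ℝ) p]
      have hmul8 : (8 * n) ^ (b:ℝ) = (8:ℝ) ^ (b:ℝ) * n ^ (b:ℝ) :=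
        Real.mul_rpow (by norm_num) hn0.le
      have hmul5 : (5 * n) ^ (-1 - 2*b) = (5:ℝ) ^ (-1 - 2*b) * n ^ (-1 - 2*b) :=
        Real.mul_rpow (by norm_num) hn0.le
      calc (2 * Real.log (8 * n)) ^ p * (5 * n) ^ (-1 - 2 * b)
          ≤ ((2 / ε) ^ p * ((8 * n) ^ (b:ℝ))) * (5 * n) ^ (-1 - 2 * b) := by
            apply mul_le_mul_of_nonneg_right _ (by positivity)
            calc (2 * Real.log (8 * n)) ^ p ≤ (2 * ((8 * n) ^ ε / ε)) ^ p := step1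
              _ = (2 / ε) ^ p * ((8 * n) ^ (ε * p)) := step2
              _ ≤ (2 / ε) ^ p * ((8 * n) ^ (b:ℝ)) := by
                  apply mul_le_mul_of_nonneg_left step3 (by positivity)
        _ = C * (n ^ (b:ℝ) * n ^ (-1 - 2*b)) := by rw [hmul8, hmul5, hC]; ring
        _ = C * n ^ (-(1 + b)) := by
            rw [← Real.rpow_add hn0]; ring_nf
  done

lemma summable_of_bound (p : ℕ) {b : ℝ} (hb : 0 < b) (f : ℤ → ℝ)
    (h : ∀ k : ℤ, k ≠ 0 → |f k| ≤ (2 * Real.log (8 * |(k : ℝ)|)) ^ p * (5 * |(k : ℝ)|) ^ (-1 - 2 * b)) :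
    Summable f := by
  have h1 : Summable (fun k : ℤ => if k = 0 then 0 else f k) := by
    refine Summable.of_norm_bounded (summable_master p hb) (fun k => ?_)
    rcases eq_or_ne k 0 with rfl | hk
    · simp
    · simpa [if_neg hk] using h k hk
  have h2 : Summable (fun k : ℤ => if k = 0 then f k else 0) := by
    apply summable_of_ne_finset_zero (s := ({0} : Finset ℤ))
    intro k hk
    simp only [Finset.mem_singleton] at hk
    simp [hk]
  have := h2.add h1
  refine this.congr (fun k => ?_)
  by_cases hk : k = 0 <;> simp [hk]

/-- exponent interval bound for rpow -/
lemma rpow_exp_bound {a x e₁ e₂ : ℝ} (ha : 0 < a) (h1 : e₁ ≤ x) (h2 : x ≤ e₂) :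
    a ^ x ≤ a ^ e₁ + a ^ e₂ := by
  rcases le_or_gt 1 a with h | h
  · have := Real.rpow_le_rpow_of_exponent_le h h2
    have h0 : 0 ≤ a ^ e₁ := (Real.rpow_pos_of_pos ha _).le
    linarith
  · have := Real.rpow_le_rpow_of_exponent_ge ha h.le h1
    have h0 : 0 ≤ a ^ e₂ := (Real.rpow_pos_of_pos ha _).le
    linarith

/-- The terms of the differentiated series. -/
def gterm (l : ℝ) (m : ℕ) (k : ℤ) (x : ℝ) : ℝ :=
  (-2 * Real.log |2 * π * (k : ℝ) + l|) ^ m * |2 * π * (k : ℝ) + l| ^ (-1 - 2 * x)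

/-- The `m`-th differentiated series. -/
def PP (l : ℝ) (m : ℕ) (x : ℝ) : ℝ := ∑' k : ℤ, gterm l m k x

def ubound (l : ℝ) (b₁ b₂ : ℝ) (m : ℕ) (k : ℤ) : ℝ :=
  if k = 0 then (2 * |Real.log (abs l)|) ^ m * (|l| ^ (-1 - 2 * b₁) + |l| ^ (-1 - 2 * b₂))
  else (2 * Real.log (8 * |(k : ℝ)|)) ^ m * (5 * |(k : ℝ)|) ^ (-1 - 2 * b₁)

lemma gterm_abs_le {l : ℝ} (hl : l ≠ 0) (hl1 : |l| ≤ 1) {b₁ b₂ x : ℝ} (hb₁ : 0 < b₁)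
    (hx1 : b₁ ≤ x) (hx2 : x ≤ b₂) (m : ℕ) (k : ℤ) :
    |gterm l m k x| ≤ ubound l b₁ b₂ m k := by
  have hpos : 0 < |2 * π * (k : ℝ) + l| := aZ_pos hl hl1 k
  have habs : |gterm l m k x| =
      (2 * |Real.log (abs (2 * π * (k : ℝ) + l))|) ^ m * |2 * π * (k : ℝ) + l| ^ (-1 - 2 * x) := by
    rw [gterm, abs_mul, abs_pow, abs_of_pos (Real.rpow_pos_of_pos hpos _), abs_mul, abs_neg]
    norm_num
  rcases eq_or_ne k 0 with rfl | hk
  · have hk0 : |2 * π * ((0:ℤ) : ℝ) + l| = |l| := by norm_num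
    rw [habs, hk0, ubound, if_pos rfl]
    have h0 : 0 < |l| := abs_pos.2 hl
    apply mul_le_mul_of_nonneg_left _ (by positivity)
    have := rpow_exp_bound (x := -1-2*x) h0 (e₁ := -1-2*b₂) (e₂ := -1-2*b₁)
      (by linarith) (by linarith)
    linarith [this]
  · rw [habs, ubound, if_neg hk]
    have h1 : (1:ℝ) ≤ |(k:ℝ)| := by exact_mod_cast Int.one_le_abs hk
    have h5 : 5 * |(k:ℝ)| ≤ |2 * π * (k : ℝ) + l| := five_le hl1 hk
    have h8 : |2 * π * (k : ℝ) + l| ≤ 8 * |(k:ℝ)| := le_eight hl1 hk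
    have ha1 : (1:ℝ) ≤ |2 * π * (k : ℝ) + l| := by linarith
    have hlog0 : 0 ≤ Real.log |2 * π * (k : ℝ) + l| := Real.log_nonneg ha1
    have hlogle : Real.log |2 * π * (k : ℝ) + l| ≤ Real.log (8 * |(k:ℝ)|) :=
      Real.log_le_log hpos h8
    apply mul_le_mul
    · apply pow_le_pow_left₀ (by positivity)
      rw [abs_of_nonneg hlog0]; linarith
    · calc |2 * π * (k : ℝ) + l| ^ (-1 - 2 * x)
          ≤ |2 * π * (k : ℝ) + l| ^ (-1 - 2 * b₁) :=
            Real.rpow_le_rpow_of_exponent_le ha1 (by linarith)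
        _ ≤ (5 * |(k:ℝ)|) ^ (-1 - 2 * b₁) :=
            Real.rpow_le_rpow_of_nonpos (by linarith) h5 (by linarith)
    · positivity
    · exact pow_nonneg (by linarith [Real.log_nonneg (show (1:ℝ) ≤ 8 * |(k:ℝ)| by linarith)]) m

lemma summable_gterm {l : ℝ} (hl : l ≠ 0) (hl1 : |l| ≤ 1) {b₁ b₂ x : ℝ} (hb₁ : 0 < b₁)
    (hx1 : b₁ ≤ x) (hx2 : x ≤ b₂) (m : ℕ) :
    Summable (fun k : ℤ => gterm l m k x) := by
  refine summable_of_bound m hb₁ _ (fun k hk => ?_)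
  have := gterm_abs_le hl hl1 hb₁ hx1 hx2 m k
  rwa [ubound, if_neg hk] at this

lemma summable_ubound {l : ℝ} (hl : l ≠ 0) {b₁ b₂ : ℝ} (hb₁ : 0 < b₁) (m : ℕ) :
    Summable (ubound l b₁ b₂ m) := by
  refine summable_of_bound m hb₁ _ (fun k hk => ?_)
  rw [ubound, if_neg hk]
  rw [abs_of_nonneg]
  have h1 : (1:ℝ) ≤ |(k:ℝ)| := by exact_mod_cast Int.one_le_abs hk
  have : (0:ℝ) ≤ Real.log (8 * |(k:ℝ)|) := Real.log_nonneg (by linarith)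
  positivity

lemma gterm_hasDerivAt {l : ℝ} (hl : l ≠ 0) (hl1 : |l| ≤ 1) (m : ℕ) (k : ℤ) (x : ℝ) :
    HasDerivAt (fun y => gterm l m k y) (gterm l (m+1) k x) x := by
  have hpos : 0 < |2 * π * (k : ℝ) + l| := aZ_pos hl hl1 k
  set a : ℝ := |2 * π * (k : ℝ) + l| with ha
  have hfun : (fun y => gterm l m k y)
      = fun y => (-2 * Real.log a) ^ m * Real.exp (Real.log a * (-1 - 2*y)) := by
    funext y
    rw [gterm, ← ha, Real.rpow_def_of_pos hpos]
  rw [hfun]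
  have h1 : HasDerivAt (fun y : ℝ => Real.log a * (-1 - 2*y)) (Real.log a * (-2)) x := by
    have := ((((hasDerivAt_id x).const_mul (2:ℝ)).const_sub (-1)).const_mul (Real.log a))
    exact this.congr_deriv (by ring)
  have h2 := (h1.exp).const_mul ((-2 * Real.log a) ^ m)
  exact h2.congr_deriv (by rw [gterm, ← ha, Real.rpow_def_of_pos hpos]; ring)

lemma PP_hasDerivAt {l : ℝ} (hl : l ≠ 0) (hl1 : |l| ≤ 1) {b₁ b₂ : ℝ} (hb₁ : 0 < b₁)
    (m : ℕ) {x : ℝ} (hx : x ∈ Set.Ioo b₁ b₂) :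
    HasDerivAt (fun y => PP l m y) (PP l (m+1) x) x := by
  simp only [PP]
  refine hasDerivAt_tsum_of_isPreconnected (u := ubound l b₁ b₂ (m+1))
    (summable_ubound hl (b₂ := b₂) hb₁ (m+1)) isOpen_Ioo
    isPreconnected_Ioo (fun k y hy => gterm_hasDerivAt hl hl1 m k y)
    (fun k y hy => ?_) hx ?_ hx
  · rw [Real.norm_eq_abs]
    exact gterm_abs_le hl hl1 hb₁ hy.1.le hy.2.le (m+1) k
  · exact summable_gterm hl hl1 hb₁ hx.1.le hx.2.le m

lemma analyticAt_realGamma {x : ℝ} (hx : 0 < x) : AnalyticAt ℝ Real.Gamma x := by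
  have h1 : AnalyticOnNhd ℂ Complex.Gamma {z : ℂ | 0 < z.re} := by
    apply DifferentiableOn.analyticOnNhd
    · intro z hz
      refine (Complex.differentiableAt_Gamma z (fun m => ?_)).differentiableWithinAt
      intro hzm
      rw [hzm] at hz
      simp only [Set.mem_setOf_eq, Complex.neg_re, Complex.natCast_re] at hz
      have : (0:ℝ) ≤ (m:ℝ) := Nat.cast_nonneg m
      linarith
    · exact isOpen_lt continuous_const Complex.continuous_re
  have h2 : AnalyticAt ℂ Complex.Gamma (x:ℂ) := h1 _ (by simpa using hx)
  have h4 : AnalyticAt ℝ (fun t : ℝ => (t:ℂ)) x := Complex.ofRealCLM.analyticAt x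
  have h5 : AnalyticAt ℝ (fun t : ℝ => (Complex.Gamma (t:ℂ)).re) x :=
    (Complex.reCLM.analyticAt _).comp ((h2.restrictScalars).comp h4)
  have hfun : (fun t : ℝ => (Complex.Gamma (t:ℂ)).re) = Real.Gamma := by
    funext t
    rw [Complex.Gamma_ofReal, Complex.ofReal_re]
  rwa [hfun] at h5

lemma analyticAt_realSin (x : ℝ) : AnalyticAt ℝ Real.sin x := by
  have h1 : AnalyticOnNhd ℂ Complex.sin Set.univ :=
    (Complex.differentiable_sin.differentiableOn).analyticOnNhd isOpen_univ
  have h2 : AnalyticAt ℂ Complex.sin (x:ℂ) := h1 _ (Set.mem_univ _)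
  have h4 : AnalyticAt ℝ (fun t : ℝ => (t:ℂ)) x := Complex.ofRealCLM.analyticAt x
  have h5 : AnalyticAt ℝ (fun t : ℝ => (Complex.sin (t:ℂ)).re) x :=
    (Complex.reCLM.analyticAt _).comp ((h2.restrictScalars).comp h4)
  have hfun : (fun t : ℝ => (Complex.sin (t:ℂ)).re) = Real.sin := by
    funext t
    rw [Complex.sin_ofReal_re]
  rwa [hfun] at h5

lemma analyticAt_CH {y : ℝ} (hy : 0 < y) : AnalyticAt ℝ CH y := by
  have haff : AnalyticAt ℝ (fun y : ℝ => 2*y+1) y :=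
    (analyticAt_const.mul analyticAt_id).add analyticAt_const
  have haff2 : AnalyticAt ℝ (fun y : ℝ => π*y) y := analyticAt_const.mul analyticAt_id
  have h1 : AnalyticAt ℝ (fun y : ℝ => Real.Gamma (2*y+1)) y :=
    (analyticAt_realGamma (by linarith)).comp haff
  have h2 : AnalyticAt ℝ (fun y : ℝ => Real.sin (π*y)) y := (analyticAt_realSin _).comp haff2
  exact (h1.mul h2).div analyticAt_const Real.pi_ne_zero

lemma analyticOnNhd_iteratedDeriv_CH (j : ℕ) :
    AnalyticOnNhd ℝ (iteratedDeriv j CH) (Set.Ioi (0:ℝ)) := by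
  induction j with
  | zero =>
    intro z hz
    simpa [iteratedDeriv_zero] using analyticAt_CH hz
  | succ n ih =>
    rw [iteratedDeriv_succ]
    exact ih.deriv

lemma CH_iteratedDeriv_hasDerivAt {y : ℝ} (hy : 0 < y) (j : ℕ) :
    HasDerivAt (iteratedDeriv j CH) (iteratedDeriv (j+1) CH y) y := by
  have h := (analyticOnNhd_iteratedDeriv_CH j y hy).differentiableAt
  rw [iteratedDeriv_succ]
  exact h.hasDerivAt

lemma leibniz_alg (k : ℕ) (c T : ℕ → ℝ) :
    ∑ j ∈ Finset.range (k+1), (k.choose j : ℝ) * (c (j+1) * T (k-j) + c j * T (k+1-j))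
      = ∑ j ∈ Finset.range (k+2), ((k+1).choose j : ℝ) * (c j * T (k+1-j)) := by
  have hS2 : ∑ j ∈ Finset.range (k+1), (k.choose j:ℝ) * (c j * T (k+1-j))
      = (∑ i ∈ Finset.range (k+1), (k.choose (i+1):ℝ) * (c (i+1) * T (k-i)))
        + c 0 * T (k+1) := by
    rw [Finset.sum_range_succ' (fun j => (k.choose j:ℝ) * (c j * T (k+1-j))) k]
    rw [Finset.sum_range_succ]
    simp only [Nat.succ_sub_succ, Nat.choose_succ_self, Nat.cast_zero, zero_mul,
      add_zero, Nat.choose_zero_right, Nat.cast_one, one_mul, Nat.sub_zero]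
  calc ∑ j ∈ Finset.range (k+1), (k.choose j : ℝ) * (c (j+1) * T (k-j) + c j * T (k+1-j))
      = (∑ j ∈ Finset.range (k+1), (k.choose j:ℝ) * (c (j+1) * T (k-j)))
        + ∑ j ∈ Finset.range (k+1), (k.choose j:ℝ) * (c j * T (k+1-j)) := by
        simp only [mul_add]
        rw [Finset.sum_add_distrib]
    _ = (∑ j ∈ Finset.range (k+1), ((k.choose j:ℝ) + (k.choose (j+1):ℝ)) * (c (j+1) * T (k-j)))
        + c 0 * T (k+1) := by
        rw [hS2]
        simp only [add_mul]
        rw [Finset.sum_add_distrib]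
        ring
    _ = ∑ j ∈ Finset.range (k+2), ((k+1).choose j : ℝ) * (c j * T (k+1-j)) := by
        rw [Finset.sum_range_succ' (fun j => ((k+1).choose j:ℝ) * (c j * T (k+1-j))) (k+1)]
        simp only [Nat.succ_sub_succ, Nat.choose_succ_succ, Nat.cast_add,
          Nat.choose_zero_right, Nat.cast_one, one_mul, Nat.sub_zero]

lemma iteratedDeriv_fBmSpec_formula {H : ℝ} (hH : H ∈ Set.Ioo (0:ℝ) 1) {l : ℝ}
    (hl : l ≠ 0) (hl1 : |l| ≤ 1) (k : ℕ) :
    ∀ x ∈ Set.Ioo (H/2) ((1+H)/2),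
      iteratedDeriv k (fun y => fBmSpec y l) x =
        ∑ j ∈ Finset.range (k+1),
          ((k.choose j : ℝ) * iteratedDeriv j CH x) * ((1 - Real.cos l) * PP l (k-j) x) := by
  obtain ⟨hH0, hH1⟩ := hH
  have hb₁ : 0 < H/2 := by linarith
  induction k with
  | zero =>
    intro x hx
    have hP : PP l 0 x = ∑' k : ℤ, |2 * π * (k : ℝ) + l| ^ (-1 - 2 * x) := by
      rw [PP]
      exact tsum_congr (fun k => by rw [gterm, pow_zero, one_mul])
    simp only [iteratedDeriv_zero, zero_add, Finset.range_one, Finset.sum_singleton,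
      Nat.choose_self, Nat.cast_one, one_mul, Nat.sub_zero, hP]
    rw [fBmSpec]
    ring
  | succ k ih =>
    intro x hx
    have hxpos : 0 < x := lt_trans hb₁ hx.1
    have hmem : Set.Ioo (H/2) ((1+H)/2) ∈ 𝓝 x := isOpen_Ioo.mem_nhds hx
    have hev : (iteratedDeriv k (fun y => fBmSpec y l)) =ᶠ[𝓝 x]
        (fun y => ∑ j ∈ Finset.range (k+1),
          ((k.choose j : ℝ) * iteratedDeriv j CH y) * ((1 - Real.cos l) * PP l (k-j) y)) :=
      Filter.eventually_of_mem hmem ih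
    rw [iteratedDeriv_succ, hev.deriv_eq]
    have hD : HasDerivAt (fun y => ∑ j ∈ Finset.range (k+1),
          ((k.choose j : ℝ) * iteratedDeriv j CH y) * ((1 - Real.cos l) * PP l (k-j) y))
        (∑ j ∈ Finset.range (k+1), (k.choose j : ℝ) *
           (iteratedDeriv (j+1) CH x * ((1 - Real.cos l) * PP l (k-j) x)
            + iteratedDeriv j CH x * ((1 - Real.cos l) * PP l (k+1-j) x))) x := by
      apply HasDerivAt.fun_sum
      intro j hj
      have hj' : j ≤ k := Nat.lt_succ_iff.mp (Finset.mem_range.mp hj)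
      have h1 : HasDerivAt (fun y => (k.choose j : ℝ) * iteratedDeriv j CH y)
          ((k.choose j : ℝ) * iteratedDeriv (j+1) CH x) x :=
        (CH_iteratedDeriv_hasDerivAt hxpos j).const_mul _
      have h2 : HasDerivAt (fun y => (1 - Real.cos l) * PP l (k-j) y)
          ((1 - Real.cos l) * PP l (k-j+1) x) x :=
        (PP_hasDerivAt hl hl1 hb₁ (k-j) hx).const_mul _
      have h3 := h1.mul h2
      have hidx : k - j + 1 = k + 1 - j := (Nat.succ_sub hj').symm
      rw [hidx] at h3
      exact h3.congr_deriv (by ring)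
    rw [hD.deriv,
      leibniz_alg k (fun j => iteratedDeriv j CH x) (fun m => (1 - Real.cos l) * PP l m x)]
    exact Finset.sum_congr rfl (fun j _ => by ring)

def QQ (l : ℝ) (m : ℕ) (x : ℝ) : ℝ := ∑' k : ℤ, if k = 0 then 0 else gterm l m k x

lemma PP_split {H : ℝ} (hH0 : 0 < H) {l : ℝ} (hl : l ≠ 0) (hl1 : |l| ≤ 1) (m : ℕ) :
    PP l m H = (2 * Real.log (1/|l|)) ^ m * |l| ^ (-1 - 2*H) + QQ l m H := by
  have hs : Summable (fun k : ℤ => gterm l m k H) :=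
    summable_gterm hl hl1 hH0 le_rfl le_rfl m
  rw [PP, hs.tsum_eq_add_tsum_ite 0, ← QQ]
  congr 1
  rw [gterm]
  have h0 : |2 * π * ((0:ℤ):ℝ) + l| = |l| := by norm_num
  rw [h0, one_div, Real.log_inv]
  ring_nf

lemma summable_QQ_terms {H : ℝ} (hH0 : 0 < H) {l : ℝ} (hl : l ≠ 0) (hl1 : |l| ≤ 1) (m : ℕ) :
    Summable (fun k : ℤ => if k = 0 then 0 else gterm l m k H) := by
  refine summable_of_bound m hH0 _ (fun k hk => ?_)
  rw [if_neg hk]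
  have := gterm_abs_le hl hl1 hH0 (le_refl H) (le_refl H) m k
  rwa [ubound, if_neg hk] at this

lemma QQ_abs_le {H : ℝ} (hH0 : 0 < H) {l : ℝ} (hl : l ≠ 0) (hl1 : |l| ≤ 1) (m : ℕ) :
    |QQ l m H| ≤ ∑' i : ℤ,
      (if i = 0 then 0 else (2*Real.log (8*|(i:ℝ)|))^m * (5*|(i:ℝ)|) ^ (-1-2*H)) := by
  have hs : Summable (fun k : ℤ => if k = 0 then 0 else gterm l m k H) :=
    summable_QQ_terms hH0 hl hl1 m
  have hnorm : Summable (fun k : ℤ => |if k = 0 then 0 else gterm l m k H|) := hs.abs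
  calc |QQ l m H| ≤ ∑' k : ℤ, |if k = 0 then 0 else gterm l m k H| := by
        rw [QQ]
        have h := norm_tsum_le_tsum_norm (f := fun k : ℤ => if k = 0 then 0 else gterm l m k H)
          (by simpa only [Real.norm_eq_abs] using hnorm)
        simpa only [Real.norm_eq_abs] using h
    _ ≤ _ := by
        refine Summable.tsum_le_tsum (fun k => ?_) hnorm (summable_master m hH0)
        rcases eq_or_ne k 0 with rfl | hk
        · simp
        · rw [if_neg hk, if_neg hk]
          have := gterm_abs_le hl hl1 hH0 (le_refl H) (le_refl H) m k
          rwa [ubound, if_neg hk] at this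

lemma CH_pos {H : ℝ} (hH0 : 0 < H) (hH1 : H < 1) : 0 < CH H := by
  have hπ : 0 < π := Real.pi_pos
  have hCHdef : CH H = Real.Gamma (2 * H + 1) * Real.sin (π * H) / π := rfl
  have h1 : 0 < Real.Gamma (2*H+1) := Real.Gamma_pos_of_pos (by linarith)
  have h2 : 0 < Real.sin (π*H) :=
    Real.sin_pos_of_pos_of_lt_pi (by positivity) (by nlinarith)
  rw [hCHdef]; positivity

lemma tendsto_L_atTop : Tendsto (fun l : ℝ => Real.log (1/|l|)) (𝓝[≠] (0:ℝ)) atTop := by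
  have hLeq : (fun l : ℝ => Real.log (1/|l|)) = fun l : ℝ => -Real.log l := by
    funext l; rw [one_div, Real.log_inv, Real.log_abs]
  rw [hLeq]
  exact tendsto_neg_atBot_atTop.comp Real.tendsto_log_nhdsNE_zero

lemma eventually_good : ∀ᶠ l : ℝ in 𝓝[≠] (0:ℝ), 0 < |l| ∧ |l| < 1 := by
  have h1 : ∀ᶠ l : ℝ in 𝓝[≠] (0:ℝ), l ≠ 0 := eventually_mem_nhdsWithin
  have h2 : ∀ᶠ l : ℝ in 𝓝 (0:ℝ), |l| < 1 := by
    filter_upwards [Metric.ball_mem_nhds (0:ℝ) one_pos] with l hl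
    simpa [Real.dist_eq] using hl
  filter_upwards [h1, h2.filter_mono nhdsWithin_le_nhds] with l ha hb
  exact ⟨abs_pos.2 ha, hb⟩

lemma tendsto_sin_ratio :
    Tendsto (fun l : ℝ => 2*(1 - Real.cos l)/l^2) (𝓝[≠] (0:ℝ)) (𝓝 1) := by
  have hslope : Tendsto (fun x : ℝ => Real.sin x / x) (𝓝[≠] (0:ℝ)) (𝓝 1) := by
    have h := Real.hasDerivAt_sin 0
    rw [hasDerivAt_iff_tendsto_slope, Real.cos_zero] at h
    refine Tendsto.congr' ?_ h
    filter_upwards with x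
    simp [slope_def_field]
  have hhalf : Tendsto (fun l : ℝ => l/2) (𝓝[≠] (0:ℝ)) (𝓝[≠] (0:ℝ)) := by
    rw [tendsto_nhdsWithin_iff]
    constructor
    · have : Tendsto (fun l : ℝ => l/2) (𝓝 (0:ℝ)) (𝓝 ((0:ℝ)/2)) :=
        (continuous_id.div_const 2).tendsto 0
      simpa using this.mono_left nhdsWithin_le_nhds
    · filter_upwards [eventually_mem_nhdsWithin] with l hl
      simp only [Set.mem_compl_iff, Set.mem_singleton_iff] at hl ⊢
      intro h; exact hl (by linarith)
  have hcomp := hslope.comp hhalf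
  have hsq : Tendsto (fun l : ℝ => (Real.sin (l/2) / (l/2))^2) (𝓝[≠] (0:ℝ)) (𝓝 1) := by
    simpa using hcomp.pow 2
  refine Tendsto.congr' ?_ hsq
  filter_upwards [eventually_mem_nhdsWithin] with l hl
  have hlne : l ≠ 0 := hl
  have hsinsq : Real.sin (l/2)^2 = (1 - Real.cos l)/2 := by
    rw [← sq_abs, Real.abs_sin_half, Real.sq_sqrt (by linarith [Real.cos_le_one l])]
  rw [div_pow, hsinsq]
  field_simp

lemma one_sub_cos_le {l : ℝ} : 1 - Real.cos l ≤ l^2/2 := by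
  have h1 : Real.sin (l/2)^2 = (1 - Real.cos l)/2 := by
    rw [← sq_abs, Real.abs_sin_half, Real.sq_sqrt (by linarith [Real.cos_le_one l])]
  have h2 : Real.sin (l/2)^2 ≤ (l/2)^2 := Real.sin_sq_le_sq
  nlinarith

def Afun (H : ℝ) (k j : ℕ) (l : ℝ) : ℝ :=
  ((k.choose j : ℝ) * iteratedDeriv j CH H) / CH H * (2*(1 - Real.cos l)/l^2) *
    ((2 * Real.log (1/|l|))⁻¹)^j

def Bfun (H : ℝ) (k j : ℕ) (l : ℝ) : ℝ :=
  ((k.choose j : ℝ) * iteratedDeriv j CH H) * ((1 - Real.cos l) * QQ l (k-j) H) /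
    ((2:ℝ)^((k:ℝ)-1) * CH H * |l| ^ (1-2*H) * (Real.log (1/|l|))^k)

lemma key_identity {H : ℝ} (hH0 : 0 < H) (hH1 : H < 1) {l : ℝ} (h0 : 0 < |l|) (h1 : |l| < 1)
    (k : ℕ) :
    iteratedDeriv k (fun H' => fBmSpec H' l) H /
      ((2:ℝ)^((k:ℝ)-1) * CH H * |l| ^ (1-2*H) * (Real.log (1/|l|))^k)
    = ∑ j ∈ Finset.range (k+1), (Afun H k j l + Bfun H k j l) := by
  have hl : l ≠ 0 := by intro h; rw [h] at h0; simp at h0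
  have hCH : 0 < CH H := CH_pos hH0 hH1
  have hform := iteratedDeriv_fBmSpec_formula ⟨hH0, hH1⟩ hl h1.le k H
    ⟨by linarith, by linarith⟩
  rw [hform, Finset.sum_div]
  refine Finset.sum_congr rfl (fun j hj => ?_)
  have hjk : j ≤ k := Nat.lt_succ_iff.mp (Finset.mem_range.mp hj)
  rw [PP_split hH0 hl h1.le (k-j)]
  have hLpos : 0 < Real.log (1/|l|) := Real.log_pos (one_lt_one_div h0 h1)
  set L : ℝ := Real.log (1/|l|) with hLdef
  have hA : ((k.choose j : ℝ) * iteratedDeriv j CH H) *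
      ((1 - Real.cos l) * ((2*L)^(k-j) * |l| ^ (-1-2*H))) /
      ((2:ℝ)^((k:ℝ)-1) * CH H * |l| ^ (1-2*H) * L^k) = Afun H k j l := by
    have hm : (k-j) + j = k := Nat.sub_add_cancel hjk
    have p2 : (2:ℝ)^((k:ℝ)-1) = 2^k / 2 := by
      rw [Real.rpow_sub two_pos, Real.rpow_natCast, Real.rpow_one]
    have hr : |l| ^ (-1-2*H) = |l| ^ (1-2*H) / l^2 := by
      rw [show (-1-2*H) = (1-2*H) - 2 by ring, Real.rpow_sub h0]
      congr 1
      rw [show ((2:ℝ)) = ((2:ℕ):ℝ) by norm_num, Real.rpow_natCast, sq_abs]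
    have hLk : L^k = L^(k-j) * L^j := by rw [← pow_add, hm]
    have h2k : (2:ℝ)^k = 2^(k-j) * 2^j := by rw [← pow_add, hm]
    have hb : |l| ^ (1-2*H) ≠ 0 := (Real.rpow_pos_of_pos h0 _).ne'
    rw [Afun, hr, p2, hLk, h2k]
    rw [← hLdef, inv_pow, mul_pow]
    have hLne : L ≠ 0 := hLpos.ne'
    field_simp
    ring
  rw [← hA, Bfun]
  rw [← add_div]
  congr 1
  ring

lemma tendsto_Afun {H : ℝ} (hH0 : 0 < H) (hH1 : H < 1) (k j : ℕ) :
    Tendsto (Afun H k j) (𝓝[≠] (0:ℝ)) (𝓝 (if j = 0 then 1 else 0)) := by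
  have hCH : 0 < CH H := CH_pos hH0 hH1
  have hinv : Tendsto (fun l : ℝ => (2 * Real.log (1/|l|))⁻¹) (𝓝[≠] (0:ℝ)) (𝓝 0) :=
    (tendsto_L_atTop.const_mul_atTop two_pos).inv_tendsto_atTop
  have h := (tendsto_const_nhds
      (x := ((k.choose j : ℝ) * iteratedDeriv j CH H) / CH H)
      (f := 𝓝[≠] (0:ℝ))).mul (tendsto_sin_ratio.mul (hinv.pow j))
  have heq : (fun l : ℝ => ((k.choose j : ℝ) * iteratedDeriv j CH H) / CH H *
      (2*(1 - Real.cos l)/l^2 * ((2 * Real.log (1/|l|))⁻¹)^j)) = Afun H k j := by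
    funext l; rw [Afun]; ring
  rw [heq] at h
  convert h using 1
  rcases j with _ | j
  · simp [iteratedDeriv_zero, div_self hCH.ne']
  · simp

lemma tendsto_Bfun {H : ℝ} (hH0 : 0 < H) (hH1 : H < 1) (k j : ℕ) :
    Tendsto (Bfun H k j) (𝓝[≠] (0:ℝ)) (𝓝 0) := by
  have hCH : 0 < CH H := CH_pos hH0 hH1
  set M : ℝ := ∑' i : ℤ,
    (if i = 0 then 0 else (2*Real.log (8*|(i:ℝ)|))^(k-j) * (5*|(i:ℝ)|) ^ (-1-2*H)) with hM
  have hM0 : 0 ≤ M := by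
    apply tsum_nonneg
    intro i
    rcases eq_or_ne i 0 with rfl | hi
    · simp
    · rw [if_neg hi]
      have h1 : (1:ℝ) ≤ |(i:ℝ)| := by exact_mod_cast Int.one_le_abs hi
      have : (0:ℝ) ≤ Real.log (8*|(i:ℝ)|) := Real.log_nonneg (by linarith)
      positivity
  set c : ℝ := (k.choose j : ℝ) * iteratedDeriv j CH H with hc
  set Cst : ℝ := (|c| * M / 2) / ((2:ℝ)^((k:ℝ)-1) * CH H) with hCst
  have hbound : ∀ᶠ l : ℝ in 𝓝[≠] (0:ℝ), ‖Bfun H k j l‖ ≤ Cst * |l| ^ (1+2*H) := by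
    filter_upwards [eventually_good, tendsto_L_atTop.eventually_ge_atTop 1] with l hgood hL1
    obtain ⟨h0, h1⟩ := hgood
    have hl : l ≠ 0 := by intro h; rw [h] at h0; simp at h0
    set L : ℝ := Real.log (1/|l|) with hLdef
    have hLpos : 0 < L := lt_of_lt_of_le one_pos hL1
    have h2r : (0:ℝ) < (2:ℝ)^((k:ℝ)-1) := Real.rpow_pos_of_pos two_pos _
    have hrl : (0:ℝ) < |l| ^ (1-2*H) := Real.rpow_pos_of_pos h0 _
    have hE : 0 < (2:ℝ)^((k:ℝ)-1) * CH H * |l| ^ (1-2*H) := by positivity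
    have hLk : (1:ℝ) ≤ L^k := one_le_pow₀ hL1
    have hDpos : 0 < (2:ℝ)^((k:ℝ)-1) * CH H * |l| ^ (1-2*H) * L^k := by positivity
    have hQ : |QQ l (k-j) H| ≤ M := QQ_abs_le hH0 hl h1.le (k-j)
    have hcos : 0 ≤ 1 - Real.cos l := by linarith [Real.cos_le_one l]
    have habsB : ‖Bfun H k j l‖ =
        |c| * ((1 - Real.cos l) * |QQ l (k-j) H|) /
          ((2:ℝ)^((k:ℝ)-1) * CH H * |l| ^ (1-2*H) * L^k) := by
      rw [Bfun, Real.norm_eq_abs, abs_div, abs_of_pos hDpos, abs_mul,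
        abs_mul (1 - Real.cos l) (QQ l (k-j) H), abs_of_nonneg hcos]
    rw [habsB]
    have hX0 : 0 ≤ |c| * ((1 - Real.cos l) * |QQ l (k-j) H|) := by positivity
    calc |c| * ((1 - Real.cos l) * |QQ l (k-j) H|) /
          ((2:ℝ)^((k:ℝ)-1) * CH H * |l| ^ (1-2*H) * L^k)
        ≤ |c| * ((1 - Real.cos l) * |QQ l (k-j) H|) /
          ((2:ℝ)^((k:ℝ)-1) * CH H * |l| ^ (1-2*H)) := by
          apply div_le_div_of_nonneg_left hX0 hE
          exact le_mul_of_one_le_right hE.le hLk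
      _ ≤ (|c| * ((l^2/2) * M)) / ((2:ℝ)^((k:ℝ)-1) * CH H * |l| ^ (1-2*H)) := by
          gcongr
          exact one_sub_cos_le
      _ = Cst * |l| ^ (1+2*H) := by
          have hll : l^2 = |l| ^ ((2:ℝ)) := by
            rw [show ((2:ℝ)) = ((2:ℕ):ℝ) by norm_num, Real.rpow_natCast, sq_abs]
          have hrr : |l| ^ ((2:ℝ)) / |l| ^ (1-2*H) = |l| ^ (1+2*H) := by
            rw [← Real.rpow_sub h0, show (2:ℝ) - (1-2*H) = 1+2*H by ring]
          rw [hCst, hll]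
          field_simp
          rw [← hrr]
          field_simp
  have hzero : Tendsto (fun l : ℝ => Cst * |l| ^ (1+2*H)) (𝓝[≠] (0:ℝ)) (𝓝 0) := by
    have habs : Tendsto (fun l : ℝ => |l|) (𝓝[≠] (0:ℝ)) (𝓝 0) :=
      tendsto_abs_nhdsNE_zero.mono_right nhdsWithin_le_nhds
    have hc' : Tendsto (fun t : ℝ => t ^ (1+2*H)) (𝓝 (0:ℝ)) (𝓝 0) := by
      have h := (Real.continuousAt_rpow_const 0 (1+2*H) (Or.inr (by linarith))).tendsto
      rwa [Real.zero_rpow (by linarith : (1:ℝ)+2*H ≠ 0)] at h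
    have := (hc'.comp habs).const_mul Cst
    simpa using this
  exact squeeze_zero_norm' hbound hzero

lemma main_tendsto {H : ℝ} (hH : H ∈ Set.Ioo (0:ℝ) 1) (k : ℕ) :
    Tendsto (fun l : ℝ =>
        iteratedDeriv k (fun H' => fBmSpec H' l) H /
          ((2 : ℝ) ^ ((k : ℝ) - 1) * CH H * |l| ^ (1 - 2 * H) *
            (Real.log (1 / |l|)) ^ k))
      (𝓝[≠] (0:ℝ)) (𝓝 1) := by
  obtain ⟨hH0, hH1⟩ := hH
  have hsum : Tendsto (fun l : ℝ => ∑ j ∈ Finset.range (k+1), (Afun H k j l + Bfun H k j l))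
      (𝓝[≠] (0:ℝ)) (𝓝 (∑ j ∈ Finset.range (k+1), ((if j = 0 then (1:ℝ) else 0) + 0))) := by
    apply tendsto_finset_sum
    intro j _
    exact (tendsto_Afun hH0 hH1 k j).add (tendsto_Bfun hH0 hH1 k j)
  have hval : (∑ j ∈ Finset.range (k+1), ((if j = 0 then (1:ℝ) else 0) + 0)) = 1 := by
    simp [Finset.sum_ite_eq' (Finset.range (k+1)) 0 (fun _ => (1:ℝ))]
  rw [hval] at hsum
  refine Tendsto.congr' ?_ hsum
  filter_upwards [eventually_good] with l hgood
  exact (key_identity hH0 hH1 hgood.1 hgood.2 k).symm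

end FBMaux

/-- **Small-frequency asymptotics of the fBm increment spectral density.** For all
`H ∈ (0,1)` and `k ≥ 0`,
`∂_H^k f_H(λ) / (2^{k-1} C_H |λ|^{1-2H} (log(1/|λ|))^k) → 1` as `λ → 0`; in particular
`f_H(λ) ~ (C_H/2)|λ|^{1-2H}` and `∂_H f_H(λ) ~ C_H |λ|^{1-2H} log(1/|λ|)`. -/
theorem fBm_spectral_density_asymptotics (H : ℝ) (hH : H ∈ Set.Ioo (0 : ℝ) 1) :
    (∀ k : ℕ,
      Tendsto (fun l : ℝ =>
          iteratedDeriv k (fun H' => fBmSpec H' l) H /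
            ((2 : ℝ) ^ ((k : ℝ) - 1) * CH H * |l| ^ (1 - 2 * H) *
              (Real.log (1 / |l|)) ^ k))
        (nhdsWithin 0 {0}ᶜ) (𝓝 1)) ∧
    Tendsto (fun l : ℝ => fBmSpec H l / ((CH H / 2) * |l| ^ (1 - 2 * H)))
      (nhdsWithin 0 {0}ᶜ) (𝓝 1) ∧
    Tendsto (fun l : ℝ =>
        deriv (fun H' => fBmSpec H' l) H /
          (CH H * |l| ^ (1 - 2 * H) * Real.log (1 / |l|)))
      (nhdsWithin 0 {0}ᶜ) (𝓝 1) := by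
  refine ⟨fun k => FBMaux.main_tendsto hH k, ?_, ?_⟩
  · have h := FBMaux.main_tendsto hH 0
    refine Filter.Tendsto.congr (fun l => ?_) h
    rw [iteratedDeriv_zero]
    have h2 : (2:ℝ) ^ (((0:ℕ) : ℝ) - 1) = 2⁻¹ := by
      rw [show ((0:ℕ):ℝ) - 1 = (-1:ℝ) by norm_num, Real.rpow_neg_one]
    rw [h2, pow_zero, mul_one]
    congr 1
    ring
  · have h := FBMaux.main_tendsto hH 1
    refine Filter.Tendsto.congr (fun l => ?_) h
    rw [iteratedDeriv_one]
    have h2 : (2:ℝ) ^ (((1:ℕ) : ℝ) - 1) = 1 := by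
      rw [show ((1:ℕ):ℝ) - 1 = (0:ℝ) by norm_num, Real.rpow_zero]
    rw [h2, one_mul, pow_one]


end
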